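/- arXiv:math/0003141 — 6 statements merged into one kernel-verified Lean document; each statement's English description precedes it below -/
import Mathlib

section
/- For every regular infinite cardinal κ, 𝔟_κ is a regular cardinal. -/
noncomputable section

open Cardinal Set

universe u

/-- `f <* g` : eventual domination of functions `κ → κ`. -/
def almostLT (κ : Cardinal.{u}) (f g : κ.ord.ToType → κ.ord.ToType) : Prop :=
  ∃ β, ∀ α, β < α → f α < g α

/-- A family `B ⊆ κ^κ` is unbounded iff no `f` eventually dominates all its members. -/
def UnboundedFam (κ : Cardinal.{u}) (B : Set (κ.ord.ToType → κ.ord.ToType)) : Prop :=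
  ∀ f : κ.ord.ToType → κ.ord.ToType, ∃ g ∈ B, ¬ almostLT κ g f

/-- `𝔟_κ` : the least cardinality of an unbounded family in `(κ^κ, <*)`. -/
def bInv (κ : Cardinal.{u}) : Cardinal.{u} :=
  sInf { c | ∃ B : Set (κ.ord.ToType → κ.ord.ToType), UnboundedFam κ B ∧ #B = c }

/-- `A ⊂* B` : `|A \ B| < κ` and `|B \ A| = κ`. -/
def ssubStar (κ : Cardinal.{u}) (A B : Set κ.ord.ToType) : Prop :=
  #(A \ B : Set _) < κ ∧ #(B \ A : Set _) = κ

/-- A tower-witness: a family `T ⊆ [κ]^κ` with `|T| ≥ κ`, well ordered by `⊂*`,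
such that every `C ∈ [κ]^κ` with co-κ-sized complement has some `A ∈ T` with
`|A \ C| = κ`. -/
def TowerWitness (κ : Cardinal.{u}) (T : Set (Set κ.ord.ToType)) : Prop :=
  (∀ A ∈ T, #A = κ) ∧
  κ ≤ #T ∧
  IsWellOrder T (fun A B => ssubStar κ A.1 B.1) ∧
  ∀ C : Set κ.ord.ToType, #C = κ → #(Cᶜ : Set _) = κ →
    ∃ A ∈ T, #(A \ C : Set _) = κ

/-- `𝔱_κ` : the least cardinality of a tower-witness. -/
def tInv (κ : Cardinal.{u}) : Cardinal.{u} :=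
  sInf { c | ∃ T : Set (Set κ.ord.ToType), TowerWitness κ T ∧ #T = c }

section Aux
variable {κ : Cardinal.{u}} (hκ : κ.IsRegular)

lemma almostLT_trans {f g h : κ.ord.ToType → κ.ord.ToType}
    (h1 : almostLT κ f g) (h2 : almostLT κ g h) : almostLT κ f h := by
  obtain ⟨β₁, hβ₁⟩ := h1
  obtain ⟨β₂, hβ₂⟩ := h2
  exact ⟨max β₁ β₂, fun α hα => (hβ₁ α ((le_max_left _ _).trans_lt hα)).trans
    (hβ₂ α ((le_max_right _ _).trans_lt hα))⟩

include hκ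

lemma nonempty_toType : Nonempty κ.ord.ToType :=
  Ordinal.nonempty_toType_iff.2 (by
    simp [Cardinal.ord_eq_zero, hκ.pos.ne'])

lemma noMax_toType : NoMaxOrder κ.ord.ToType :=
  Ordinal.toType_noMax_of_succ_lt fun a ha => (Cardinal.isSuccLimit_ord hκ.aleph0_le).succ_lt ha

/-- families of size < κ are everywhere dominated -/
lemma exists_strict_dominating {B : Set (κ.ord.ToType → κ.ord.ToType)} (hB : #B < κ) :
    ∃ f : κ.ord.ToType → κ.ord.ToType, ∀ g ∈ B, ∀ α, g α < f α := by
  have key : ∀ α : κ.ord.ToType, ∃ b, ∀ g ∈ B, g α < b := by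
    intro α
    have hS : #(range fun g : B => g.1 α) < Ordinal.cof (@Ordinal.type _ ((· < ·) : κ.ord.ToType → κ.ord.ToType → Prop) isWellOrder_lt) := by
      rw [Ordinal.type_toType, hκ.cof_eq]
      exact (mk_range_le).trans_lt hB
    obtain ⟨b, hb⟩ := not_isCofinal_iff.1 fun hc => (Order.cof_le hc).not_gt (by rw [Ordinal.cof_toType]; rwa [Ordinal.type_toType] at hS)
    exact ⟨b, fun g hg => hb _ (mem_range_self (⟨g, hg⟩ : B))⟩
  choose f hf using key
  exact ⟨f, fun g hg α => hf α g hg⟩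

lemma bInv_set_nonempty :
    { c | ∃ B : Set (κ.ord.ToType → κ.ord.ToType), UnboundedFam κ B ∧ #B = c }.Nonempty := by
  refine ⟨_, univ, fun f => ⟨f, mem_univ _, ?_⟩, rfl⟩
  rintro ⟨β, hβ⟩
  have := noMax_toType hκ
  obtain ⟨α, hα⟩ := exists_gt β
  exact lt_irrefl _ (hβ α hα)

lemma le_bInv : κ ≤ bInv κ := by
  refine le_csInf (bInv_set_nonempty hκ) ?_
  rintro c ⟨B, hB, rfl⟩
  by_contra hlt
  push_neg at hlt
  obtain ⟨f, hf⟩ := exists_strict_dominating hκ hlt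
  obtain ⟨g, hg, hng⟩ := hB f
  have := nonempty_toType hκ
  exact hng ⟨Classical.arbitrary _, fun α _ => hf g hg α⟩

lemma exists_eventual_bound {B : Set (κ.ord.ToType → κ.ord.ToType)} (hB : #B < bInv κ) :
    ∃ f, ∀ g ∈ B, almostLT κ g f := by
  by_contra h
  push_neg at h
  have : UnboundedFam κ B := fun f => h f
  exact hB.not_ge (csInf_le' ⟨B, this, rfl⟩)

end Aux

/-- For every regular infinite cardinal `κ`, `𝔟_κ` is regular. -/
theorem b_isRegular (κ : Cardinal.{u}) (hκ : κ.IsRegular) : (bInv κ).IsRegular := by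
  have hκb : κ ≤ bInv κ := le_bInv hκ
  have hℵ : ℵ₀ ≤ bInv κ := hκ.aleph0_le.trans hκb
  refine ⟨hℵ, ?_⟩
  by_contra h
  push_neg at h
  set c := bInv κ with hc
  obtain ⟨B, hBu, hBc⟩ := csInf_mem (bInv_set_nonempty hκ)
  have hBc' : #B = c := hBc
  -- bijection B ≃ c.ord.ToType
  have : Nonempty (B ≃ c.ord.ToType) := by
    rw [← Cardinal.eq, hBc', Cardinal.mk_ord_toType]
  obtain ⟨e⟩ := this
  -- cofinal set
  obtain ⟨S, hSu, hSc⟩ := Order.exists_cof_eq c.ord.ToType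
  rw [Ordinal.cof_toType] at hSc
  -- pieces
  set Bs : c.ord.ToType → Set (κ.ord.ToType → κ.ord.ToType) :=
    fun s => {g | ∃ hg : g ∈ B, e ⟨g, hg⟩ ≤ s} with hBs
  have hBslt : ∀ s, #(Bs s) < c := by
    intro s
    have hinj : #(Bs s) ≤ #(Iic s) := by
      refine mk_le_of_injective (f := fun g => (⟨e ⟨g.1, g.2.choose⟩, g.2.choose_spec⟩ : Iic s)) ?_
      rintro ⟨g, hg⟩ ⟨g', hg'⟩ hgg
      simp only [Subtype.mk.injEq] at hgg ⊢
      exact congrArg Subtype.val (e.injective (congrArg Subtype.val hgg))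
    have hIic : #(Iic s) < c := by
      have : (Iic s) = insert s (Iio s) := by
        ext x; simp [le_iff_lt_or_eq, or_comm]
      rw [this]
      calc #(insert s (Iio s) : Set _) ≤ #(Iio s) + 1 := mk_insert_le
        _ < c := Cardinal.add_lt_of_lt hℵ (Cardinal.mk_Iio_ord_toType s)
              (one_lt_aleph0.trans_le hℵ)
    exact hinj.trans_lt hIic
  -- bounds for pieces
  have hFs : ∀ s, ∃ f, ∀ g ∈ Bs s, almostLT κ g f :=
    fun s => exists_eventual_bound hκ ((hBslt s).trans_le hc.le)
  choose F hF using hFs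
  -- bound for the family of bounds
  have hR : #(F '' S) < c := by
    refine (mk_image_le).trans_lt ?_
    rw [hSc]; exact h
  obtain ⟨g, hg⟩ := exists_eventual_bound hκ (hR.trans_le hc.le)
  -- contradiction
  obtain ⟨h₀, hh₀, hnh₀⟩ := hBu g
  obtain ⟨s, hsS, hs⟩ := hSu (e ⟨h₀, hh₀⟩)
  have hmem : h₀ ∈ Bs s := ⟨hh₀, hs⟩
  exact hnh₀ (almostLT_trans (hF s h₀ hmem) (hg (F s) (mem_image_of_mem F hsS)))
end
end

section
/- In the (E,D̄)-setup: if A ⊆ κ is (E,D̄)-closed and A ∈ D^+(κ), then there exist two disjoint (E,D̄)-closed subsets B, C of A with B ∈ D^+(κ) and C ∈ D^+(κ). -/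
noncomputable section

open Cardinal Set

universe u

/-- The generator `[α, κ) \ ⋃_{i<α} A_i` of the filter `D(κ)`. -/
def genD (κ : Cardinal.{u}) (A : κ.ord.ToType → Set κ.ord.ToType)
    (α : κ.ord.ToType) : Set κ.ord.ToType :=
  {ξ | α ≤ ξ} \ ⋃ i ∈ Iio α, A i

/-- The filter `D(κ)` on `κ` generated by the sets `[α, κ) \ ⋃_{i<α} A_i`
(these generators are decreasing, so the filter is their upward closure). -/
def DK (κ : Cardinal.{u}) (A : κ.ord.ToType → Set κ.ord.ToType) :
    Set (Set κ.ord.ToType) :=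
  {X | ∃ α, genD κ A α ⊆ X}

/-- `D^+(κ)`: the sets whose complement is not in `D(κ)`. -/
def DKplus (κ : Cardinal.{u}) (A : κ.ord.ToType → Set κ.ord.ToType) :
    Set (Set κ.ord.ToType) :=
  {X | Xᶜ ∉ DK κ A}

/-- `X =_{D(κ)} 0`, i.e. `κ \ X ∈ D(κ)`. -/
def DKzero (κ : Cardinal.{u}) (A : κ.ord.ToType → Set κ.ord.ToType)
    (X : Set κ.ord.ToType) : Prop :=
  Xᶜ ∈ DK κ A

/-- `X ⊂*_{D(κ)} Y` : `X \ Y =_{D(κ)} 0` and `Y \ X ∈ D^+(κ)`. -/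
def DKssub (κ : Cardinal.{u}) (A : κ.ord.ToType → Set κ.ord.ToType)
    (X Y : Set κ.ord.ToType) : Prop :=
  DKzero κ A (X \ Y) ∧ (Y \ X) ∈ DKplus κ A

/-- The filter `D^δ` on `δ` generated by the sets `[α, δ) \ ⋃_{i<α} A_i` for `α < δ`;
its members are regarded as subsets of `Iio δ`. -/
def Ddelta (κ : Cardinal.{u}) (A : κ.ord.ToType → Set κ.ord.ToType)
    (δ : κ.ord.ToType) : Set (Set κ.ord.ToType) :=
  {X | X ⊆ Iio δ ∧ ∃ α, α < δ ∧ genD κ A α ∩ Iio δ ⊆ X}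

/-- `D` is a proper filter on the ambient set `S`. -/
def IsProperFilterOn (κ : Cardinal.{u}) (S : Set κ.ord.ToType)
    (D : Set (Set κ.ord.ToType)) : Prop :=
  S ∈ D ∧ ∅ ∉ D ∧ (∀ X ∈ D, X ⊆ S) ∧
  (∀ X ∈ D, ∀ Y, X ⊆ Y → Y ⊆ S → Y ∈ D) ∧
  (∀ X ∈ D, ∀ Y ∈ D, X ∩ Y ∈ D)

/-- The filter on the ambient set `S` generated by a filter `base` together with a
further family `G` of sets. -/
def GenOver (κ : Cardinal.{u}) (S : Set κ.ord.ToType)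
    (base G : Set (Set κ.ord.ToType)) : Set (Set κ.ord.ToType) :=
  {X | X ⊆ S ∧ ∃ Y ∈ base, ∃ s ⊆ G, s.Finite ∧ Y ∩ ⋂₀ s ⊆ X}

/-- `C` is closed unbounded in `κ`. -/
def IsClubIn (κ : Cardinal.{u}) (C : Set κ.ord.ToType) : Prop :=
  (∀ α, ∃ ξ ∈ C, α < ξ) ∧
  (∀ ξ, (∃ η, η < ξ) → (∀ η, η < ξ → ∃ c ∈ C, η < c ∧ c < ξ) → ξ ∈ C)

/-- `δ` is a limit element of `κ`: nonminimal, with no largest element below it. -/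
def IsLimitElt (κ : Cardinal.{u}) (δ : κ.ord.ToType) : Prop :=
  (∃ η, η < δ) ∧ ∀ η, η < δ → ∃ η', η < η' ∧ η' < δ

/-- The `(E, D̄)`-setup: `κ` is regular uncountable with `κ^{<κ} = κ`;
`A i` (`i < κ`) are pairwise disjoint subsets of `κ ∖ (i+1)` of size `κ` covering
`κ ∖ {0}`; `E` is a set of limit ordinals `δ < κ`, containing a club, such that each
`A α ∩ δ` (`α < δ`) is unbounded in `δ`; `delta ζ` is the unique `δ ∈ E` with
`ζ ∈ A δ`; and `D ζ` (for `ζ ∈ A* = ⋃_{δ∈E} A δ`) is a proper filter on `δ_ζ`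
extending `D^{δ_ζ}`, generated over it by fewer than `κ` sets, such that every such
filter occurs as `D ζ` for `κ` many `ζ ∈ A δ`. -/
structure EDSetup (κ : Cardinal.{u}) where
  A : κ.ord.ToType → Set κ.ord.ToType
  E : Set κ.ord.ToType
  D : κ.ord.ToType → Set (Set κ.ord.ToType)
  delta : κ.ord.ToType → κ.ord.ToType
  hreg : κ.IsRegular
  hunc : ℵ₀ < κ
  hpow : κ ^< κ = κ
  hdisj : ∀ i j, i ≠ j → Disjoint (A i) (A j)
  hgt : ∀ i, ∀ ξ ∈ A i, i < ξ
  hAcard : ∀ i, #(A i) = κ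
  hcover : (⋃ i, A i) = {ξ | ∃ η, η < ξ}
  hElim : ∀ δ ∈ E, IsLimitElt κ δ
  hEunb : ∀ δ ∈ E, ∀ α, α < δ → ∀ β, β < δ → ∃ ξ ∈ A α, β < ξ ∧ ξ < δ
  hEclub : ∃ C ⊆ E, IsClubIn κ C
  hdelta : ∀ δ ∈ E, ∀ ζ ∈ A δ, delta ζ = δ
  hDfilter : ∀ δ ∈ E, ∀ ζ ∈ A δ, IsProperFilterOn κ (Iio δ) (D ζ)
  hDgen : ∀ δ ∈ E, ∀ ζ ∈ A δ,
    ∃ G : Set (Set κ.ord.ToType), #G < κ ∧ D ζ = GenOver κ (Iio δ) (Ddelta κ A δ) G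
  hDall : ∀ δ ∈ E, ∀ Df : Set (Set κ.ord.ToType),
    IsProperFilterOn κ (Iio δ) Df →
    (∃ G : Set (Set κ.ord.ToType), #G < κ ∧
        Df = GenOver κ (Iio δ) (Ddelta κ A δ) G) →
    #({ζ ∈ A δ | D ζ = Df} : Set κ.ord.ToType) = κ

/-- `A* = ⋃_{δ ∈ E} A_δ`. -/
def Astar (κ : Cardinal.{u}) (S : EDSetup κ) : Set κ.ord.ToType :=
  ⋃ δ ∈ S.E, S.A δ

/-- `X` is `(E, D̄)`-closed: whenever `ζ ∈ A*` and `X ∩ δ_ζ ∈ D_ζ`, also `ζ ∈ X`. -/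
def EDClosed (κ : Cardinal.{u}) (S : EDSetup κ) (X : Set κ.ord.ToType) : Prop :=
  ∀ ζ ∈ Astar κ S, X ∩ Iio (S.delta ζ) ∈ S.D ζ → ζ ∈ X

/-- `cl(X)`: the smallest `(E, D̄)`-closed subset of `κ` containing `X`. -/
def EDcl (κ : Cardinal.{u}) (S : EDSetup κ) (X : Set κ.ord.ToType) :
    Set κ.ord.ToType :=
  ⋂₀ {Y | EDClosed κ S Y ∧ X ⊆ Y}

section Aux

variable {κ : Cardinal.{u}}

lemma genD_antitone {A : κ.ord.ToType → Set κ.ord.ToType} {α β : κ.ord.ToType} (h : β ≤ α) :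
    genD κ A α ⊆ genD κ A β := by
  rintro ξ ⟨h1, h2⟩
  refine ⟨h.trans h1, fun hm => h2 ?_⟩
  simp only [mem_iUnion, mem_Iio] at hm ⊢
  obtain ⟨i, hi, hx⟩ := hm
  exact ⟨i, lt_of_lt_of_le hi h, hx⟩

variable (S : EDSetup κ)

lemma astar_spec {ζ : κ.ord.ToType} (hζ : ζ ∈ Astar κ S) :
    S.delta ζ ∈ S.E ∧ ζ ∈ S.A (S.delta ζ) := by
  simp only [Astar, mem_iUnion] at hζ
  obtain ⟨δ, hδ, hA⟩ := hζ
  rw [S.hdelta δ hδ ζ hA]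
  exact ⟨hδ, hA⟩

lemma delta_lt {ζ : κ.ord.ToType} (hζ : ζ ∈ Astar κ S) : S.delta ζ < ζ :=
  S.hgt _ ζ (astar_spec S hζ).2

lemma D_filter {ζ : κ.ord.ToType} (hζ : ζ ∈ Astar κ S) :
    IsProperFilterOn κ (Iio (S.delta ζ)) (S.D ζ) :=
  S.hDfilter _ (astar_spec S hζ).1 ζ (astar_spec S hζ).2

lemma D_nonempty {ζ : κ.ord.ToType} (hζ : ζ ∈ Astar κ S) {T : Set κ.ord.ToType}
    (hT : T ∈ S.D ζ) : T.Nonempty := by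
  rcases T.eq_empty_or_nonempty with rfl | h
  · exact absurd hT (D_filter S hζ).2.1
  · exact h

lemma D_upward {ζ : κ.ord.ToType} (hζ : ζ ∈ Astar κ S) {T T' : Set κ.ord.ToType}
    (hT : T ∈ S.D ζ) (h1 : T ⊆ T') (h2 : T' ⊆ Iio (S.delta ζ)) : T' ∈ S.D ζ :=
  (D_filter S hζ).2.2.2.1 T hT T' h1 h2

lemma D_inter {ζ : κ.ord.ToType} (hζ : ζ ∈ Astar κ S) {T T' : Set κ.ord.ToType}
    (hT : T ∈ S.D ζ) (hT' : T' ∈ S.D ζ) : T ∩ T' ∈ S.D ζ :=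
  (D_filter S hζ).2.2.2.2 T hT T' hT'

lemma D_base {ζ γ : κ.ord.ToType} (hζ : ζ ∈ Astar κ S) (hγ : γ < S.delta ζ) :
    genD κ S.A γ ∩ Iio (S.delta ζ) ∈ S.D ζ := by
  obtain ⟨G, -, hGen⟩ := S.hDgen _ (astar_spec S hζ).1 ζ (astar_spec S hζ).2
  rw [hGen]
  refine ⟨inter_subset_right, genD κ S.A γ ∩ Iio _, ⟨inter_subset_right, γ, hγ, subset_rfl⟩,
    ∅, empty_subset _, finite_empty, ?_⟩
  simp

lemma mem_EDcl {X : Set κ.ord.ToType} {ζ : κ.ord.ToType} :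
    ζ ∈ EDcl κ S X ↔ ∀ Y, EDClosed κ S Y → X ⊆ Y → ζ ∈ Y := by
  simp only [EDcl, mem_sInter, mem_setOf_eq, and_imp]

lemma subset_EDcl (X : Set κ.ord.ToType) : X ⊆ EDcl κ S X :=
  fun _ hx => (mem_EDcl S).2 fun _ _ hXY => hXY hx

lemma EDcl_subset {X Y : Set κ.ord.ToType} (hY : EDClosed κ S Y) (hXY : X ⊆ Y) :
    EDcl κ S X ⊆ Y :=
  fun _ hx => (mem_EDcl S).1 hx Y hY hXY

lemma EDcl_closed (X : Set κ.ord.ToType) : EDClosed κ S (EDcl κ S X) := by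
  intro ζ hζ hmem
  refine (mem_EDcl S).2 fun Y hY hXY => hY ζ hζ (D_upward S hζ hmem ?_ inter_subset_right)
  exact inter_subset_inter_left _ (EDcl_subset S hY hXY)

lemma EDcl_cases {X : Set κ.ord.ToType} {ζ : κ.ord.ToType} (hζ : ζ ∈ EDcl κ S X) :
    ζ ∈ X ∨ (ζ ∈ Astar κ S ∧ EDcl κ S X ∩ Iio (S.delta ζ) ∈ S.D ζ) := by
  have hZ : EDcl κ S X ⊆ EDcl κ S X ∩
      {ρ | ρ ∈ X ∨ (ρ ∈ Astar κ S ∧ EDcl κ S X ∩ Iio (S.delta ρ) ∈ S.D ρ)} := by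
    refine EDcl_subset S ?_ ?_
    · intro ρ hρ hmem
      have h1 : EDcl κ S X ∩ Iio (S.delta ρ) ∈ S.D ρ :=
        D_upward S hρ hmem (inter_subset_inter_left _ inter_subset_left) inter_subset_right
      exact ⟨EDcl_closed S X ρ hρ h1, Or.inr ⟨hρ, h1⟩⟩
    · intro x hx
      exact ⟨subset_EDcl S X hx, Or.inl hx⟩
  exact (hZ hζ).2

lemma EDcl_supported (X : Set κ.ord.ToType) : ∀ ρ, ρ ∈ EDcl κ S X →
    ρ ∈ X ∨ (ρ ∈ Astar κ S ∧ ∀ γ < S.delta ρ, ∃ c ∈ X, γ < c ∧ c < S.delta ρ) := by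
  intro ρ
  induction ρ using WellFoundedLT.induction with
  | ind ρ IH =>
  intro hρ
  rcases EDcl_cases S hρ with h | ⟨hA, hcap⟩
  · exact Or.inl h
  · refine Or.inr ⟨hA, fun γ hγ => ?_⟩
    obtain ⟨γ', hγγ', hγ'δ⟩ := (S.hElim _ (astar_spec S hA).1).2 γ hγ
    have hT : (EDcl κ S X ∩ Iio (S.delta ρ)) ∩ (genD κ S.A γ' ∩ Iio (S.delta ρ)) ∈ S.D ρ :=
      D_inter S hA hcap (D_base S hA hγ'δ)
    obtain ⟨τ, ⟨hτcl, hτδ⟩, hτgen, -⟩ := D_nonempty S hA hT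
    have hτρ : τ < ρ := hτδ.trans (delta_lt S hA)
    have hγ'τ : γ' ≤ τ := hτgen.1
    rcases IH τ hτρ hτcl with h | ⟨hτA, hsupp⟩
    · exact ⟨τ, h, lt_of_lt_of_le hγγ' hγ'τ, hτδ⟩
    · have hγ'dτ : γ' ≤ S.delta τ := by
        by_contra hlt
        push_neg at hlt
        exact hτgen.2 (mem_biUnion hlt (astar_spec S hτA).2)
      obtain ⟨c, hc, hγc, hcδτ⟩ := hsupp γ (lt_of_lt_of_le hγγ' hγ'dτ)
      exact ⟨c, hc, hγc, hcδτ.trans ((delta_lt S hτA).trans hτδ)⟩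

lemma bounded_of_card_lt (hreg : κ.IsRegular) (s : Set κ.ord.ToType) (hs : #s < κ) :
    ∃ γ, ∀ x ∈ s, x < γ := by
  haveI : IsWellOrder κ.ord.ToType (· < ·) := isWellOrder_lt (α := κ.ord.ToType)
  have h : #s < Ordinal.cof (Ordinal.type ((· < ·) : κ.ord.ToType → κ.ord.ToType → Prop)) := by
    rw [Ordinal.type_toType, hreg.cof_eq]
    exact hs
  refine not_isCofinal_iff.1 fun hc => (Order.cof_le hc).not_gt ?_
  rwa [Ordinal.cof_type] at h

lemma mk_Iic_lt (hreg : κ.IsRegular) (β : κ.ord.ToType) : #(Iic β) < κ := by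
  haveI : IsWellOrder κ.ord.ToType (· < ·) := isWellOrder_lt (α := κ.ord.ToType)
  have h1 : #(Iio β) < κ := by
    have he : #(Iio β) =
        (Ordinal.typein ((· < ·) : κ.ord.ToType → κ.ord.ToType → Prop) β).card := by
      exact Ordinal.card_typein (r := ((· < ·) : κ.ord.ToType → κ.ord.ToType → Prop)) β
    rw [he]
    exact Cardinal.lt_ord.1 (Ordinal.typein_lt_self β)
  calc #(Iic β) ≤ #(Iio β) + 1 := by rw [← Set.Iio_insert]; exact Cardinal.mk_insert_le
  _ < κ := Cardinal.add_lt_of_lt hreg.aleph0_le h1 (Cardinal.one_lt_aleph0.trans_le hreg.aleph0_le)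

end Aux
section Club

variable {κ : Cardinal.{u}}

lemma exists_closurePoint (hreg : κ.IsRegular) (hunc : ℵ₀ < κ) {C : Set κ.ord.ToType}
    (hC : IsClubIn κ C) (g : κ.ord.ToType → κ.ord.ToType) (α : κ.ord.ToType) :
    ∃ δ ∈ C, α < δ ∧ ∀ x, x < δ → g x < δ := by
  haveI : IsWellOrder κ.ord.ToType (· < ·) := isWellOrder_lt (α := κ.ord.ToType)
  have step : ∀ β : κ.ord.ToType, ∃ β', (β' ∈ C ∧ β < β') ∧ ∀ x, x ≤ β → g x < β' := by
    intro β
    have hcard : #(insert β (g '' Iic β) : Set κ.ord.ToType) < κ := by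
      refine lt_of_le_of_lt Cardinal.mk_insert_le (Cardinal.add_lt_of_lt hreg.aleph0_le ?_ ?_)
      · exact lt_of_le_of_lt Cardinal.mk_image_le (mk_Iic_lt hreg β)
      · exact Cardinal.one_lt_aleph0.trans_le hreg.aleph0_le
    obtain ⟨γ, hγ⟩ := bounded_of_card_lt hreg _ hcard
    obtain ⟨β', hβ'C, hγβ'⟩ := hC.1 γ
    refine ⟨β', ⟨hβ'C, (hγ β (mem_insert _ _)).trans hγβ'⟩, fun x hx => ?_⟩
    exact (hγ (g x) (mem_insert_of_mem _ (mem_image_of_mem g hx))).trans hγβ'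
  obtain ⟨a0, ha0C, hαa0⟩ := hC.1 α
  let a : ℕ → κ.ord.ToType := fun n => Nat.rec a0 (fun _ prev => (step prev).choose) n
  have haC : ∀ n, a n ∈ C := by
    intro n
    cases n with
    | zero => exact ha0C
    | succ m => exact (step (a m)).choose_spec.1.1
  have hmono : ∀ n, a n < a (n + 1) := fun n => (step (a n)).choose_spec.1.2
  have hstep : ∀ n x, x ≤ a n → g x < a (n + 1) := fun n => (step (a n)).choose_spec.2
  let t : ℕ → Ordinal.{u} :=
    fun n => Ordinal.typein ((· < ·) : κ.ord.ToType → κ.ord.ToType → Prop) (a n)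
  have htlt : ∀ n, t n < κ.ord := fun n => Ordinal.typein_lt_self (a n)
  have hsup : (⨆ n, t n) < Ordinal.type ((· < ·) : κ.ord.ToType → κ.ord.ToType → Prop) := by
    rw [Ordinal.type_toType]
    apply Ordinal.iSup_lt_ord_lift _ htlt
    rw [hreg.cof_eq, Cardinal.mk_nat, Cardinal.lift_aleph0]
    exact hunc
  let δ : κ.ord.ToType := Ordinal.enum ((· < ·)) ⟨⨆ n, t n, hsup⟩
  have htδ : Ordinal.typein ((· < ·) : κ.ord.ToType → κ.ord.ToType → Prop) δ = ⨆ n, t n :=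
    Ordinal.typein_enum _ _
  have hlt : ∀ x : κ.ord.ToType, x < δ ↔
      Ordinal.typein ((· < ·) : κ.ord.ToType → κ.ord.ToType → Prop) x < ⨆ n, t n := by
    intro x
    rw [← htδ]
    exact (Ordinal.typein_lt_typein _).symm
  have han : ∀ n, a n < δ := by
    intro n
    rw [hlt]
    exact lt_of_lt_of_le ((Ordinal.typein_lt_typein _).2 (hmono n)) (Ordinal.le_iSup t (n + 1))
  have hbelow : ∀ x, x < δ → ∃ n, x < a n := by
    intro x hx
    rw [hlt] at hx
    obtain ⟨n, hn⟩ := Ordinal.lt_iSup_iff.1 hx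
    exact ⟨n, (Ordinal.typein_lt_typein _).1 hn⟩
  refine ⟨δ, ?_, hαa0.trans (han 0), ?_⟩
  · refine hC.2 δ ⟨α, hαa0.trans (han 0)⟩ fun η hη => ?_
    obtain ⟨n, hn⟩ := hbelow η hη
    exact ⟨a n, haC n, hn, han n⟩
  · intro x hx
    obtain ⟨n, hn⟩ := hbelow x hx
    exact lt_trans (hstep n x hn.le) (han (n + 1))

end Club
section AuxF

variable {κ : Cardinal.{u}} (S : EDSetup κ) (X : Set κ.ord.ToType)

/-- The filter on `Iio δ` generated by `D^δ` together with `X ∩ Iio δ`. -/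
def auxF (δ : κ.ord.ToType) : Set (Set κ.ord.ToType) :=
  GenOver κ (Iio δ) (Ddelta κ S.A δ) {X ∩ Iio δ}

lemma auxF_mem {δ : κ.ord.ToType} {T : Set κ.ord.ToType} (hT : T ∈ auxF S X δ) :
    ∃ γ, γ < δ ∧ ∀ ρ, ρ ∈ genD κ S.A γ → ρ ∈ X → ρ < δ → ρ ∈ T := by
  obtain ⟨hTs, Y, ⟨hYs, γ, hγ, hgen⟩, s, hs, -, hsub⟩ := hT
  refine ⟨γ, hγ, fun ρ hρg hρX hρδ => hsub ⟨hgen ⟨hρg, hρδ⟩, ?_⟩⟩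
  refine mem_sInter.2 fun t ht => ?_
  obtain rfl := mem_singleton_iff.1 (hs ht)
  exact ⟨hρX, hρδ⟩

lemma auxF_mk {δ : κ.ord.ToType} {T : Set κ.ord.ToType} (hTs : T ⊆ Iio δ)
    (h : ∃ γ, γ < δ ∧ genD κ S.A γ ∩ X ∩ Iio δ ⊆ T) : T ∈ auxF S X δ := by
  obtain ⟨γ, hγ, hsub⟩ := h
  refine ⟨hTs, genD κ S.A γ ∩ Iio δ, ⟨inter_subset_right, γ, hγ, subset_rfl⟩,
    {X ∩ Iio δ}, subset_rfl, finite_singleton _, ?_⟩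
  rw [sInter_singleton]
  rintro ρ ⟨⟨hρg, hρδ⟩, hρX, -⟩
  exact hsub ⟨⟨hρg, hρX⟩, hρδ⟩

lemma pick_pair (hcl : EDClosed κ S X) {f : κ.ord.ToType → κ.ord.ToType}
    (hfX : ∀ γ, f γ ∈ X) (hfgen : ∀ γ, f γ ∈ genD κ S.A γ)
    {δ : κ.ord.ToType} (hδE : δ ∈ S.E) (hfc : ∀ x, x < δ → f x < δ) :
    ∃ p : κ.ord.ToType × κ.ord.ToType, p.1 ∈ S.A δ ∧ p.2 ∈ S.A δ ∧ p.1 ≠ p.2 ∧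
      S.D p.1 = auxF S X δ ∧ S.D p.2 = auxF S X δ ∧ p.1 ∈ X ∧ p.2 ∈ X := by
  obtain ⟨x₀, hx₀⟩ := (S.hElim δ hδE).1
  have hwit : ∀ γ, γ < δ → f γ ∈ genD κ S.A γ ∩ X ∩ Iio δ :=
    fun γ hγ => ⟨⟨hfgen γ, hfX γ⟩, hfc γ hγ⟩
  have hproper : IsProperFilterOn κ (Iio δ) (auxF S X δ) := by
    refine ⟨?_, ?_, fun T hT => hT.1, ?_, ?_⟩
    · exact auxF_mk S X subset_rfl ⟨x₀, hx₀, inter_subset_right⟩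
    · intro h0
      obtain ⟨γ, hγ, hsub⟩ := auxF_mem S X h0
      obtain ⟨⟨h1, h2⟩, h3⟩ := hwit γ hγ
      exact hsub (f γ) h1 h2 h3
    · rintro T hT T' hsub hT's
      obtain ⟨γ, hγ, h⟩ := auxF_mem S X hT
      exact auxF_mk S X hT's ⟨γ, hγ, fun ρ hρ => hsub (h ρ hρ.1.1 hρ.1.2 hρ.2)⟩
    · intro T hT T' hT'
      obtain ⟨γ, hγ, h⟩ := auxF_mem S X hT
      obtain ⟨γ', hγ', h'⟩ := auxF_mem S X hT'
      refine auxF_mk S X (fun ρ hρ => hT.1 hρ.1) ⟨max γ γ', max_lt hγ hγ', ?_⟩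
      rintro ρ ⟨⟨hρg, hρX⟩, hρδ⟩
      exact ⟨h ρ (genD_antitone (le_max_left γ γ') hρg) hρX hρδ,
        h' ρ (genD_antitone (le_max_right γ γ') hρg) hρX hρδ⟩
  have hXmem : X ∩ Iio δ ∈ auxF S X δ :=
    auxF_mk S X inter_subset_right ⟨x₀, hx₀, fun ρ hρ => ⟨hρ.1.2, hρ.2⟩⟩
  have hGcard : #({X ∩ Iio δ} : Set (Set κ.ord.ToType)) < κ := by
    rw [Cardinal.mk_singleton]
    exact Cardinal.one_lt_aleph0.trans S.hunc
  have hnum := S.hDall δ hδE (auxF S X δ) hproper ⟨{X ∩ Iio δ}, hGcard, rfl⟩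
  have hnt : ({ζ ∈ S.A δ | S.D ζ = auxF S X δ} : Set κ.ord.ToType).Nontrivial := by
    rw [← Set.nontrivial_coe_sort, ← Cardinal.one_lt_iff_nontrivial, hnum]
    exact Cardinal.one_lt_aleph0.trans S.hunc
  obtain ⟨p₁, hp₁, p₂, hp₂, hne⟩ := hnt
  have hmemX : ∀ p, p ∈ S.A δ → S.D p = auxF S X δ → p ∈ X := by
    intro p hpA hpD
    have hpstar : p ∈ Astar κ S := mem_biUnion hδE hpA
    refine hcl p hpstar ?_
    rw [S.hdelta δ hδE p hpA, hpD]
    exact hXmem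
  exact ⟨(p₁, p₂), hp₁.1, hp₂.1, hne, hp₁.2, hp₂.2,
    hmemX p₁ hp₁.1 hp₁.2, hmemX p₂ hp₂.1 hp₂.2⟩

end AuxF
/-- Lemma 4: if `X` is `(E,D̄)`-closed and in `D^+(κ)` then it contains two disjoint
`(E,D̄)`-closed subsets in `D^+(κ)`. -/
theorem exists_disjoint_closed_subsets (κ : Cardinal.{u}) (S : EDSetup κ)
    (X : Set κ.ord.ToType) (hcl : EDClosed κ S X) (hpos : X ∈ DKplus κ S.A) :
    ∃ B C : Set κ.ord.ToType, B ⊆ X ∧ C ⊆ X ∧ Disjoint B C ∧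
      EDClosed κ S B ∧ EDClosed κ S C ∧ B ∈ DKplus κ S.A ∧ C ∈ DKplus κ S.A := by
  classical
  obtain ⟨C, hCE, hC⟩ := S.hEclub
  -- a choice function witnessing positivity of `X`
  have hfex : ∀ α : κ.ord.ToType, ∃ p, p ∈ X ∧ p ∈ genD κ S.A α := by
    intro α
    by_contra h
    push_neg at h
    exact hpos ⟨α, fun ξ hξ hX => h ξ hX hξ⟩
  choose f hfX hfgen using hfex
  -- choice of the two seeds at each good point
  have hpick : ∀ δ : κ.ord.ToType, ∃ p : κ.ord.ToType × κ.ord.ToType,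
      (δ ∈ S.E ∧ ∀ x, x < δ → f x < δ) →
      p.1 ∈ S.A δ ∧ p.2 ∈ S.A δ ∧ p.1 ≠ p.2 ∧
        S.D p.1 = auxF S X δ ∧ S.D p.2 = auxF S X δ ∧ p.1 ∈ X ∧ p.2 ∈ X := by
    intro δ
    by_cases hg : δ ∈ S.E ∧ ∀ x, x < δ → f x < δ
    · obtain ⟨p, hp⟩ := pick_pair S X hcl hfX hfgen hg.1 hg.2
      exact ⟨p, fun _ => hp⟩
    · exact ⟨(δ, δ), fun h => absurd h hg⟩
  choose pf hpf using hpick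
  set ξf : κ.ord.ToType → κ.ord.ToType := fun δ => (pf δ).1 with hξf
  set ηf : κ.ord.ToType → κ.ord.ToType := fun δ => (pf δ).2 with hηf
  set q : κ.ord.ToType → κ.ord.ToType := fun δ => max (ξf δ) (ηf δ) with hqdef
  set Dset : Set κ.ord.ToType := {δ | δ ∈ C ∧ ∀ x, x < δ → max (f x) (q x) < δ} with hDdef
  have hgood : ∀ δ ∈ Dset, δ ∈ S.E ∧ ∀ x, x < δ → f x < δ :=
    fun δ hδ => ⟨hCE hδ.1, fun x hx => (le_max_left _ _).trans_lt (hδ.2 x hx)⟩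
  have hspec : ∀ δ ∈ Dset, ξf δ ∈ S.A δ ∧ ηf δ ∈ S.A δ ∧ ξf δ ≠ ηf δ ∧
      S.D (ξf δ) = auxF S X δ ∧ S.D (ηf δ) = auxF S X δ ∧ ξf δ ∈ X ∧ ηf δ ∈ X :=
    fun δ hδ => hpf δ (hgood δ hδ)
  have hq : ∀ δ ∈ Dset, ∀ x, x < δ → q x < δ :=
    fun δ hδ x hx => (le_max_right _ _).trans_lt (hδ.2 x hx)
  have hDunb : ∀ α, ∃ δ ∈ Dset, α < δ := by
    intro α
    obtain ⟨δ, hδC, hαδ, hcl'⟩ :=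
      exists_closurePoint S.hreg S.hunc hC (fun x => max (f x) (q x)) α
    exact ⟨δ, ⟨hδC, hcl'⟩, hαδ⟩
  have hstar : ∀ δ ∈ Dset, ∀ w, w ∈ S.A δ → w ∈ Astar κ S ∧ S.delta w = δ := by
    intro δ hδ w hw
    have hE := hCE hδ.1
    exact ⟨mem_biUnion hE hw, S.hdelta δ hE w hw⟩
  -- the main case of the disjointness induction
  have main : ∀ u v : κ.ord.ToType → κ.ord.ToType,
      (∀ δ ∈ Dset, u δ ∈ S.A δ) → (∀ δ ∈ Dset, v δ ∈ S.A δ) →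
      (∀ δ ∈ Dset, u δ ∈ X) →
      (∀ δ ∈ Dset, S.D (u δ) = auxF S X δ) →
      (∀ δ, u δ ≤ q δ) → (∀ δ, v δ ≤ q δ) →
      ∀ ζ, (∀ τ, τ < ζ → ¬(τ ∈ EDcl κ S (u '' Dset) ∧ τ ∈ EDcl κ S (v '' Dset))) →
      ζ ∈ u '' Dset → EDcl κ S (v '' Dset) ∩ Iio (S.delta ζ) ∈ S.D ζ → False := by
    intro u v hu hv huX huD huq hvq ζ IH hζ hcap
    obtain ⟨δ₀, hδ₀, rfl⟩ := hζ
    rw [(hstar δ₀ hδ₀ _ (hu δ₀ hδ₀)).2, huD δ₀ hδ₀] at hcap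
    obtain ⟨γ, hγ, H⟩ := auxF_mem S X hcap
    by_cases hi : ∃ δ' ∈ Dset, γ ≤ δ' ∧ δ' < δ₀
    · obtain ⟨δ', hδ', hγδ', hδ'δ₀⟩ := hi
      have hwA := hu δ' hδ'
      have hδ'w : δ' < u δ' := S.hgt δ' _ hwA
      have hwgen : u δ' ∈ genD κ S.A γ := by
        refine ⟨(hγδ'.trans hδ'w.le : γ ≤ u δ'), fun hm => ?_⟩
        simp only [mem_iUnion, mem_Iio] at hm
        obtain ⟨i, hiγ, hwi⟩ := hm
        exact Set.disjoint_left.mp (S.hdisj i δ' (ne_of_lt (hiγ.trans_le hγδ'))) hwi hwA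
      have hwδ₀ : u δ' < δ₀ := (huq δ').trans_lt (hq δ₀ hδ₀ δ' hδ'δ₀)
      have hwV : u δ' ∈ EDcl κ S (v '' Dset) := (H _ hwgen (huX δ' hδ') hwδ₀).1
      exact IH (u δ') (hwδ₀.trans (S.hgt δ₀ _ (hu δ₀ hδ₀)))
        ⟨subset_EDcl S _ (mem_image_of_mem u hδ'), hwV⟩
    · have hsmall : ∀ δ' ∈ Dset, δ' < δ₀ → δ' < γ := by
        intro δ' h1 h2
        by_contra hle
        push_neg at hle
        exact hi ⟨δ', h1, hle, h2⟩
      obtain ⟨β, hγβ, hβδ₀, hgap⟩ : ∃ β, γ ≤ β ∧ β < δ₀ ∧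
          ∀ c ∈ v '' Dset, ¬(β < c ∧ c < δ₀) := by
        by_cases hcex : ∃ c ∈ v '' Dset, γ < c ∧ c < δ₀
        · obtain ⟨c₀, hc₀V, hγc₀, hc₀δ₀⟩ := hcex
          obtain ⟨δ₁, hδ₁, rfl⟩ := hc₀V
          refine ⟨v δ₁, hγc₀.le, hc₀δ₀, ?_⟩
          rintro c ⟨δ₂, hδ₂, rfl⟩ ⟨h1, h2⟩
          have hδ₁γ : δ₁ < γ := hsmall δ₁ hδ₁ ((S.hgt δ₁ _ (hv δ₁ hδ₁)).trans hc₀δ₀)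
          have hδ₂γ : δ₂ < γ := hsmall δ₂ hδ₂ ((S.hgt δ₂ _ (hv δ₂ hδ₂)).trans h2)
          rcases lt_trichotomy δ₁ δ₂ with h | h | h
          · have hv1 : v δ₁ < γ :=
              (((hvq δ₁).trans (le_max_right _ _)).trans_lt (hδ₂.2 δ₁ h)).trans hδ₂γ
            exact absurd hv1 (lt_asymm hγc₀)
          · subst h
            exact lt_irrefl _ h1
          · have hv2 : v δ₂ < γ :=
              (((hvq δ₂).trans (le_max_right _ _)).trans_lt (hδ₁.2 δ₂ h)).trans hδ₁γ
            exact absurd hv2 (lt_asymm (hγc₀.trans h1))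
        · refine ⟨γ, le_rfl, hγ, fun c hcV hcc => hcex ⟨c, hcV, hcc⟩⟩
      obtain ⟨β', hββ', hβ'δ₀⟩ := (S.hElim δ₀ (hCE hδ₀.1)).2 β hβδ₀
      have hρδ₀ : f β' < δ₀ := (le_max_left _ _).trans_lt (hδ₀.2 β' hβ'δ₀)
      have hρgen : f β' ∈ genD κ S.A β' := hfgen β'
      have hρV : f β' ∈ EDcl κ S (v '' Dset) :=
        (H _ (genD_antitone (hγβ.trans hββ'.le) hρgen) (hfX β') hρδ₀).1
      rcases EDcl_supported S (v '' Dset) _ hρV with hmem | ⟨hρA, hsupp⟩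
      · exact hgap _ hmem ⟨hββ'.trans_le hρgen.1, hρδ₀⟩
      · have hβ'δρ : β' ≤ S.delta (f β') := by
          by_contra hlt
          push_neg at hlt
          exact hρgen.2 (mem_biUnion hlt (astar_spec S hρA).2)
        obtain ⟨c, hcV, hβc, hcδρ⟩ := hsupp β (hββ'.trans_le hβ'δρ)
        exact hgap c hcV ⟨hβc, hcδρ.trans ((delta_lt S hρA).trans hρδ₀)⟩
  -- disjointness of the two closures
  have hdisjBC : ∀ ζ, ¬(ζ ∈ EDcl κ S (ξf '' Dset) ∧ ζ ∈ EDcl κ S (ηf '' Dset)) := by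
    intro ζ
    induction ζ using WellFoundedLT.induction with
    | ind ζ IH =>
    rintro ⟨hB, hC'⟩
    rcases EDcl_cases S hB with hB0 | ⟨hζA, hBcap⟩
    · rcases EDcl_cases S hC' with hC0 | ⟨hζA, hCcap⟩
      · obtain ⟨δ₁, h₁, he₁⟩ := hB0
        obtain ⟨δ₂, h₂, he₂⟩ := hC0
        have heq : δ₁ = δ₂ := by
          by_contra hne
          exact Set.disjoint_left.mp (S.hdisj δ₁ δ₂ hne) (he₁ ▸ (hspec δ₁ h₁).1)
            (he₂ ▸ (hspec δ₂ h₂).2.1)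
        subst heq
        exact (hspec δ₁ h₁).2.2.1 (he₁.trans he₂.symm)
      · exact main ξf ηf (fun δ h => (hspec δ h).1) (fun δ h => (hspec δ h).2.1)
          (fun δ h => (hspec δ h).2.2.2.2.2.1) (fun δ h => (hspec δ h).2.2.2.1)
          (fun δ => le_max_left _ _) (fun δ => le_max_right _ _) ζ
          (fun τ hτ => IH τ hτ) hB0 hCcap
    · rcases EDcl_cases S hC' with hC0 | ⟨hζA', hCcap⟩
      · exact main ηf ξf (fun δ h => (hspec δ h).2.1) (fun δ h => (hspec δ h).1)
          (fun δ h => (hspec δ h).2.2.2.2.2.2) (fun δ h => (hspec δ h).2.2.2.2.1)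
          (fun δ => le_max_right _ _) (fun δ => le_max_left _ _) ζ
          (fun τ hτ hp => IH τ hτ ⟨hp.2, hp.1⟩) hC0 hBcap
      · obtain ⟨τ, ⟨hτB, hτδ⟩, hτC, -⟩ :=
          D_nonempty S hζA (D_inter S hζA hBcap hCcap)
        exact IH τ (hτδ.trans (delta_lt S hζA)) ⟨hτB, hτC⟩
  -- positivity
  have hposi : ∀ w : κ.ord.ToType → κ.ord.ToType, (∀ δ ∈ Dset, w δ ∈ S.A δ) →
      EDcl κ S (w '' Dset) ∈ DKplus κ S.A := by
    intro w hw
    rintro ⟨α, hα⟩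
    obtain ⟨δ, hδ, hαδ⟩ := hDunb α
    have hwA := hw δ hδ
    have hgen : w δ ∈ genD κ S.A α := by
      refine ⟨(hαδ.le.trans (S.hgt δ _ hwA).le : α ≤ w δ), fun hm => ?_⟩
      simp only [mem_iUnion, mem_Iio] at hm
      obtain ⟨i, hiα, hwi⟩ := hm
      exact Set.disjoint_left.mp (S.hdisj i δ (ne_of_lt (hiα.trans hαδ))) hwi hwA
    exact hα hgen (subset_EDcl S _ (mem_image_of_mem w hδ))
  refine ⟨EDcl κ S (ξf '' Dset), EDcl κ S (ηf '' Dset), ?_, ?_, ?_,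
    EDcl_closed S _, EDcl_closed S _, ?_, ?_⟩
  · exact EDcl_subset S hcl (by rintro _ ⟨δ, hδ, rfl⟩; exact (hspec δ hδ).2.2.2.2.2.1)
  · exact EDcl_subset S hcl (by rintro _ ⟨δ, hδ, rfl⟩; exact (hspec δ hδ).2.2.2.2.2.2)
  · exact Set.disjoint_left.2 fun τ h1 h2 => hdisjBC τ ⟨h1, h2⟩
  · exact hposi ξf fun δ h => (hspec δ h).1
  · exact hposi ηf fun δ h => (hspec δ h).2.1
end
end

section
/- In the (E,D̄)-setup: let τ < κ be a regular cardinal and let A_i ∈ D^+(κ) for i < τ be (E,D̄)-closed sets such that A_j ⊂*_{D(κ)} A_i whenever i < j < τ. Then ⋂_{i<τ} A_i ∈ D^+(κ) and ⋂_{i<τ} A_i is (E,D̄)-closed. -/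
noncomputable section

open Cardinal Set

universe u

section Helpers

variable (κ : Cardinal.{u})

lemma exists_strict_ub (hreg : κ.IsRegular)
    (s : Set κ.ord.ToType) (hs : #s < κ) : ∃ β, ∀ x ∈ s, x < β := by
  by_contra hc
  push_neg at hc
  have h := Order.cof_le (α := κ.ord.ToType) (s := s) hc
  rw [Ordinal.cof_toType, hreg.cof_ord] at h
  exact absurd hs (not_lt.2 h)

lemma genD_anti (A : κ.ord.ToType → Set κ.ord.ToType)
    {α α' : κ.ord.ToType} (h : α ≤ α') : genD κ A α' ⊆ genD κ A α := by
  intro ξ hξ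
  exact ⟨h.trans hξ.1, fun hm => hξ.2 (biUnion_subset_biUnion_left (Iio_subset_Iio h) hm)⟩

lemma mem_DKplus_iff (A : κ.ord.ToType → Set κ.ord.ToType)
    (X : Set κ.ord.ToType) :
    X ∈ DKplus κ A ↔ ∀ α, (genD κ A α ∩ X).Nonempty := by
  simp only [DKplus, DK, mem_setOf_eq, not_exists]
  constructor
  · intro h α
    rcases eq_empty_or_nonempty (genD κ A α ∩ X) with he | hne
    · exact absurd (fun ξ hξ => by
        by_contra hc
        exact (eq_empty_iff_forall_notMem.1 he ξ) ⟨hξ, not_not.1 hc⟩) (h α)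
    · exact hne
  · intro h α hsub
    obtain ⟨ξ, hξ1, hξ2⟩ := h α
    exact hsub hξ1 hξ2

end Helpers

/-- Lemma 5: if `τ < κ` is regular and `⟨A_i : i < τ⟩` is a `⊂*_{D(κ)}`-decreasing
sequence of `(E,D̄)`-closed sets in `D^+(κ)`, then `⋂_{i<τ} A_i` is an
`(E,D̄)`-closed set in `D^+(κ)`. -/
theorem iInter_closed_of_short (κ τ : Cardinal.{u}) (S : EDSetup κ)
    (hτ : τ.IsRegular) (hτκ : τ < κ)
    (B : τ.ord.ToType → Set κ.ord.ToType)
    (hpos : ∀ i, B i ∈ DKplus κ S.A)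
    (hcl : ∀ i, EDClosed κ S (B i))
    (hdec : ∀ i j, i < j → DKssub κ S.A (B j) (B i)) :
    (⋂ i, B i) ∈ DKplus κ S.A ∧ EDClosed κ S (⋂ i, B i) := by
  classical
  haveI hTne : Nonempty κ.ord.ToType :=
    Ordinal.nonempty_toType_iff.2
      (by simp only [ne_eq, Cardinal.ord_eq_zero]
          exact (aleph0_pos.trans_le S.hreg.aleph0_le).ne')
  haveI hτTne : Nonempty τ.ord.ToType :=
    Ordinal.nonempty_toType_iff.2
      (by simp only [ne_eq, Cardinal.ord_eq_zero]
          exact (aleph0_pos.trans_le hτ.aleph0_le).ne')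
  have hτT : #(τ.ord.ToType) = τ := by rw [Cardinal.mk_toType, Cardinal.card_ord]
  have hκinf : ℵ₀ ≤ κ := S.hreg.aleph0_le
  -- choice of points in generators
  have hBne : ∀ (j : τ.ord.ToType) (β : κ.ord.ToType), ∃ ξ, ξ ∈ genD κ S.A β ∩ B j :=
    fun j β => (mem_DKplus_iff κ S.A (B j)).1 (hpos j) β
  choose f hf using hBne
  -- choice of witnesses for nullity of differences
  have hnull : ∀ p : τ.ord.ToType × τ.ord.ToType, ∃ β, p.1 < p.2 →
      genD κ S.A β ⊆ (B p.2 \ B p.1)ᶜ := by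
    intro p
    by_cases h : p.1 < p.2
    · obtain ⟨β, hβ⟩ := (hdec p.1 p.2 h).1
      exact ⟨β, fun _ => hβ⟩
    · exact ⟨Classical.arbitrary _, fun hc => absurd hc h⟩
  choose g hg using hnull
  -- a bound for all the nullity witnesses
  have hprod : #(τ.ord.ToType × τ.ord.ToType) < κ := by
    rw [Cardinal.mk_prod, hτT]
    simp only [Cardinal.lift_id]
    exact Cardinal.mul_lt_of_lt hκinf hτκ hτκ
  obtain ⟨α₀, hα₀⟩ := exists_strict_ub κ S.hreg (Set.range g)
    (lt_of_le_of_lt Cardinal.mk_range_le hprod)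
  -- the "next step" function
  have hnxe : ∀ β : κ.ord.ToType, ∃ γ, β < γ ∧
      ∀ (j : τ.ord.ToType) (β' : κ.ord.ToType), β' < β → f j β' < γ := by
    intro β
    have hcard : #(insert β (Set.range
        (fun p : τ.ord.ToType × (Iio β) => f p.1 p.2)) : Set κ.ord.ToType) < κ := by
      refine lt_of_le_of_lt Cardinal.mk_insert_le (Cardinal.add_lt_of_lt hκinf ?_ ?_)
      · refine lt_of_le_of_lt Cardinal.mk_range_le ?_
        rw [Cardinal.mk_prod, hτT]
        simp only [Cardinal.lift_id]
        exact Cardinal.mul_lt_of_lt hκinf hτκ (Cardinal.mk_Iio_ord_toType β)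
      · exact lt_of_lt_of_le Cardinal.one_lt_aleph0 hκinf
    obtain ⟨γ, hγ⟩ := exists_strict_ub κ S.hreg _ hcard
    exact ⟨γ, hγ β (mem_insert _ _),
      fun j β' h => hγ _ (mem_insert_of_mem _ ⟨(j, ⟨β', h⟩), rfl⟩)⟩
  choose nx hnx1 hnx2 using hnxe
  -- the club inside E
  obtain ⟨C, hCE, hCunb, hCcl⟩ := S.hEclub
  choose cnext hcnextC hcnextgt using hCunb
  constructor
  · -- ⋂ B i ∈ D⁺(κ)
    rw [mem_DKplus_iff]
    intro α
    -- build an increasing ω-sequence through C closed under f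
    obtain ⟨st, hst⟩ := exists_strict_ub κ S.hreg {α, α₀}
      (lt_of_lt_of_le ((Set.Finite.insert _ (finite_singleton _)).lt_aleph0) hκinf)
    let seq : ℕ → κ.ord.ToType :=
      fun n => Nat.rec (cnext st) (fun _ prev => cnext (nx prev)) n
    have hseq0 : seq 0 = cnext st := rfl
    have hseqS : ∀ n, seq (n + 1) = cnext (nx (seq n)) := fun n => rfl
    have hseqC : ∀ n, seq n ∈ C := by
      intro n
      cases n with
      | zero => exact hcnextC st
      | succ m => exact hcnextC (nx (seq m))
    have hseqmono : ∀ n, seq n < seq (n + 1) := by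
      intro n
      rw [hseqS]
      exact lt_trans (hnx1 (seq n)) (hcnextgt _)
    have hPne : {β : κ.ord.ToType | ∀ n, seq n < β}.Nonempty := by
      obtain ⟨β, hβ⟩ := exists_strict_ub κ S.hreg (Set.range seq)
        (lt_of_le_of_lt (Set.Countable.le_aleph0 (countable_range seq)) S.hunc)
      exact ⟨β, fun n => hβ _ (mem_range_self n)⟩
    set δ := (@wellFounded_lt κ.ord.ToType _ _).min
      {β : κ.ord.ToType | ∀ n, seq n < β} hPne with hδdef
    have hδub : ∀ n, seq n < δ :=
      (@wellFounded_lt κ.ord.ToType _ _).min_mem _ hPne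
    have hδlt : ∀ η, η < δ → ∃ n, η < seq n := by
      intro η hη
      by_contra hc
      push_neg at hc
      have hηP : η ∈ {β : κ.ord.ToType | ∀ n, seq n < β} :=
        fun n => lt_of_lt_of_le (hseqmono n) (hc (n + 1))
      exact (@wellFounded_lt κ.ord.ToType _ _).not_lt_min _ hηP hη
    have hδC : δ ∈ C := by
      refine hCcl δ ⟨seq 0, hδub 0⟩ (fun η hη => ?_)
      obtain ⟨n, hn⟩ := hδlt η hη
      exact ⟨seq (n + 1), hseqC (n + 1), lt_trans hn (hseqmono n), hδub (n + 1)⟩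
    have hδE : δ ∈ S.E := hCE hδC
    have hαδ : α < δ :=
      lt_trans (lt_trans (hst α (mem_insert _ _)) (hcnextgt st)) (hδub 0)
    have hα₀δ : α₀ < δ :=
      lt_trans (lt_trans (hst α₀ (mem_insert_of_mem _ rfl)) (hcnextgt st)) (hδub 0)
    have hclosedf : ∀ β, β < δ → ∀ j, f j β < δ := by
      intro β hβ j
      obtain ⟨n, hn⟩ := hδlt β hβ
      have h1 : f j β < nx (seq n) := hnx2 (seq n) j β hn
      have h2 : nx (seq n) < seq (n + 1) := by rw [hseqS]; exact hcnextgt _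
      exact lt_trans (lt_trans h1 h2) (hδub (n + 1))
    -- the filter D_f on Iio δ
    set Gset : Set (Set κ.ord.ToType) :=
      Set.range (fun j : τ.ord.ToType => B j ∩ Iio δ) with hGdef
    have hcore : ∀ β, β < δ → ∀ s : Set (Set κ.ord.ToType), s ⊆ Gset → s.Finite →
        ∃ ξ, ξ ∈ genD κ S.A β ∧ ξ < δ ∧ ∀ y ∈ s, ξ ∈ y := by
      intro β hβ s hs hsfin
      rcases eq_empty_or_nonempty s with rfl | hsne
      · obtain ⟨j₀⟩ := hτTne
        exact ⟨f j₀ β, (hf j₀ β).1, hclosedf β hβ j₀, by simp⟩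
      · have hidx : ∀ y ∈ s, ∃ j : τ.ord.ToType, B j ∩ Iio δ = y := fun y hy => hs hy
        choose! jf hjf using hidx
        obtain ⟨jm, hjmJ, hjmax⟩ :=
          Set.Finite.exists_maximalFor id (jf '' s) (hsfin.image jf) (hsne.image jf)
        have hmax : ∀ j ∈ jf '' s, j ≤ jm := by
          intro j hj
          rcases le_total j jm with h | h
          · exact h
          · exact (hjmax hj h).ge
        set β' := max β α₀ with hβ'def
        have hβ' : β' < δ := max_lt hβ hα₀δ
        refine ⟨f jm β', genD_anti κ S.A (le_max_left β α₀) (hf jm β').1,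
          hclosedf β' hβ' jm, ?_⟩
        intro y hy
        rw [← hjf y hy]
        have hjy : jf y ≤ jm := hmax (jf y) (mem_image_of_mem jf hy)
        rcases eq_or_lt_of_le hjy with heq | hlt
        · rw [heq]
          exact ⟨(hf jm β').2, hclosedf β' hβ' jm⟩
        · refine ⟨?_, hclosedf β' hβ' jm⟩
          by_contra hcB
          have hgp : genD κ S.A (g (jf y, jm)) ⊆ (B jm \ B (jf y))ᶜ := hg (jf y, jm) hlt
          have hξg : f jm β' ∈ genD κ S.A (g (jf y, jm)) :=
            genD_anti κ S.A ((hα₀ _ (mem_range_self (jf y, jm))).le.trans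
              (le_max_right β α₀)) (hf jm β').1
          exact hgp hξg ⟨(hf jm β').2, hcB⟩
    have hIioD : Iio δ ∈ Ddelta κ S.A δ :=
      ⟨Subset.rfl, seq 0, hδub 0, inter_subset_right⟩
    set Df := GenOver κ (Iio δ) (Ddelta κ S.A δ) Gset with hDfdef
    have hDf_filter : IsProperFilterOn κ (Iio δ) Df := by
      refine ⟨⟨Subset.rfl, Iio δ, hIioD, ∅, empty_subset _, finite_empty, by simp⟩,
        ?_, fun X hX => hX.1, ?_, ?_⟩
      · rintro ⟨-, Y, ⟨hY1, β, hβδ, hβsub⟩, s, hsG, hsfin, hsub⟩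
        obtain ⟨ξ, hξg, hξδ, hξs⟩ := hcore β hβδ s hsG hsfin
        exact absurd (hsub ⟨hβsub ⟨hξg, hξδ⟩, fun y hy => hξs y hy⟩)
          (notMem_empty ξ)
      · rintro X ⟨hX1, Y, hY, s, hsG, hsfin, hsub⟩ Z hXZ hZ
        exact ⟨hZ, Y, hY, s, hsG, hsfin, hsub.trans hXZ⟩
      · rintro X ⟨hX1, Y1, ⟨hs1, β1, hβ1, hg1⟩, s1, hs1G, hs1f, hsub1⟩
          Z ⟨hZ1, Y2, ⟨hs2, β2, hβ2, hg2⟩, s2, hs2G, hs2f, hsub2⟩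
        refine ⟨fun x hx => hX1 hx.1, Y1 ∩ Y2,
          ⟨fun x hx => hs1 hx.1, max β1 β2, max_lt hβ1 hβ2, ?_⟩,
          s1 ∪ s2, union_subset hs1G hs2G, hs1f.union hs2f, ?_⟩
        · exact subset_inter
            ((inter_subset_inter_left _ (genD_anti κ S.A (le_max_left β1 β2))).trans hg1)
            ((inter_subset_inter_left _ (genD_anti κ S.A (le_max_right β1 β2))).trans hg2)
        · intro ξ hξ
          rw [sInter_union] at hξ
          exact ⟨hsub1 ⟨hξ.1.1, hξ.2.1⟩, hsub2 ⟨hξ.1.2, hξ.2.2⟩⟩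
    have hGcard : #Gset < κ := lt_of_le_of_lt Cardinal.mk_range_le (hτT.trans_lt hτκ)
    have hsize := S.hDall δ hδE Df hDf_filter ⟨Gset, hGcard, rfl⟩
    have hne : ({ζ ∈ S.A δ | S.D ζ = Df} : Set κ.ord.ToType).Nonempty := by
      rw [← nonempty_coe_sort, ← Cardinal.mk_ne_zero_iff, hsize]
      exact (aleph0_pos.trans_le hκinf).ne'
    obtain ⟨ζ, hζA, hζD⟩ := hne
    have hδζ : S.delta ζ = δ := S.hdelta δ hδE ζ hζA
    have hζstar : ζ ∈ Astar κ S := mem_biUnion hδE hζA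
    have hζB : ∀ j, ζ ∈ B j := by
      intro j
      refine hcl j ζ hζstar ?_
      rw [hδζ, hζD]
      exact ⟨inter_subset_right, Iio δ, hIioD, {B j ∩ Iio δ},
        singleton_subset_iff.2 (mem_range_self j), finite_singleton _, by
          rw [sInter_singleton]; exact inter_subset_right⟩
    refine ⟨ζ, ⟨le_of_lt (lt_trans hαδ (S.hgt δ ζ hζA)), ?_⟩, mem_iInter.2 hζB⟩
    intro hmem
    obtain ⟨i, hiα, hiA⟩ := mem_iUnion₂.1 hmem
    exact (Set.disjoint_left.1 (S.hdisj i δ (ne_of_lt (lt_trans hiα hαδ))) hiA) hζA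
  · -- ⋂ B i is (E, D̄)-closed
    intro ζ hζ hmem
    obtain ⟨δ', hδ'E, hζA⟩ := mem_iUnion₂.1 hζ
    have hδζ : S.delta ζ = δ' := S.hdelta δ' hδ'E ζ hζA
    have hfil := S.hDfilter δ' hδ'E ζ hζA
    refine mem_iInter.2 (fun j => hcl j ζ hζ ?_)
    refine hfil.2.2.2.1 _ hmem _
      (inter_subset_inter_left _ (iInter_subset B j)) ?_
    rw [hδζ] at *
    exact inter_subset_right
end
end

section
/- In the (E,D̄)-setup: for every A ⊆ κ, A =_{D(κ)} 0 if and only if cl(A) =_{D(κ)} 0. -/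
noncomputable section

open Cardinal Set

universe u

/-- Observation 3(d): `X =_{D(κ)} 0` iff `cl(X) =_{D(κ)} 0`. -/
theorem cl_eqZero_iff (κ : Cardinal.{u}) (S : EDSetup κ) (X : Set κ.ord.ToType) :
    DKzero κ S.A X ↔ DKzero κ S.A (EDcl κ S X) := by
  have genD_anti : ∀ {a b : κ.ord.ToType}, a ≤ b → genD κ S.A b ⊆ genD κ S.A a := by
    intro a b hab ξ hξ
    refine ⟨le_trans hab hξ.1, fun hm => hξ.2 ?_⟩
    obtain ⟨i, hi, hmem⟩ := by simpa using hm
    exact by simpa using ⟨i, lt_of_lt_of_le hi hab, hmem⟩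
  constructor
  · rintro ⟨α, hα⟩
    -- pick β > α (any element of A α works)
    have hAne : (S.A α).Nonempty := by
      rw [← Set.nonempty_coe_sort, ← Cardinal.mk_ne_zero_iff, S.hAcard]
      exact (Cardinal.aleph0_pos.trans S.hunc).ne'
    obtain ⟨β, hβ⟩ := hAne
    have hαβ : α < β := S.hgt α β hβ
    -- Z = (genD α)ᶜ ∪ A α is (E,D̄)-closed
    set Z : Set κ.ord.ToType := (genD κ S.A α)ᶜ ∪ S.A α with hZ
    have hZclosed : EDClosed κ S Z := by
      intro ζ hζ hmem
      obtain ⟨δ, hδE, hζδ⟩ : ∃ δ ∈ S.E, ζ ∈ S.A δ := by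
        simpa [Astar] using hζ
      have hdel : S.delta ζ = δ := S.hdelta δ hδE ζ hζδ
      rcases lt_trichotomy δ α with h | h | h
      · left
        intro hg
        exact hg.2 (by simpa using ⟨δ, h, hζδ⟩)
      · right; rw [h] at hζδ; exact hζδ
      · exfalso
        obtain ⟨α', hαα', hα'δ⟩ := (S.hElim δ hδE).2 α h
        have hDf := S.hDfilter δ hδE ζ hζδ
        obtain ⟨G, hG, hDeq⟩ := S.hDgen δ hδE ζ hζδ
        have hW : genD κ S.A α' ∩ Iio δ ∈ S.D ζ := by
          rw [hDeq]
          exact ⟨inter_subset_right, genD κ S.A α' ∩ Iio δ,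
            ⟨inter_subset_right, α', hα'δ, subset_rfl⟩, ∅, empty_subset _,
            finite_empty, by simp⟩
        rw [hdel] at hmem
        have hint := hDf.2.2.2.2 _ hW _ hmem
        have hempty : genD κ S.A α' ∩ Iio δ ∩ (Z ∩ Iio δ) = ∅ := by
          ext ξ
          simp only [mem_inter_iff, mem_empty_iff_false, iff_false]
          rintro ⟨⟨hξg, -⟩, hξZ, -⟩
          rcases hξZ with hξZ | hξZ
          · exact hξZ (genD_anti hαα'.le hξg)
          · exact hξg.2 (by simpa using ⟨α, hαα', hξZ⟩)
        rw [hempty] at hint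
        exact hDf.2.1 hint
    have hXZ : X ⊆ Z := fun x hx => Or.inl (fun hg => hα hg hx)
    have hcl : EDcl κ S X ⊆ Z := sInter_subset_of_mem ⟨hZclosed, hXZ⟩
    refine ⟨β, fun ξ hξ hmem => ?_⟩
    rcases hcl hmem with h | h
    · exact h (genD_anti hαβ.le hξ)
    · exact hξ.2 (by simpa using ⟨α, hαβ, h⟩)
  · rintro ⟨α, hα⟩
    refine ⟨α, fun ξ hξ hX => hα hξ ?_⟩
    exact fun Y hY => hY.2 hX
end
end

section
/- The tower-destroying partial order 𝕋_a is κ-closed: for every limit ordinal γ < κ, every ≤-decreasing sequence ⟨p_i : i < γ⟩ of conditions in 𝕋_a has a lower bound in 𝕋_a. -/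
noncomputable section

open Cardinal Set

universe u

/-- A condition of the tower-destroying forcing `𝕋_a`: a pair `(s, x)` where
`s : γ → 2` for some `γ < κ` (coded by its domain `dom` and the set
`S = {η < dom : s η = 1}`) and `x ⊆ ε` with `|x| < κ`. -/
structure TowerCond (κ ε : Cardinal.{u}) where
  dom : κ.ord.ToType
  S : Set κ.ord.ToType
  hS : S ⊆ Iio dom
  x : Set ε.ord.ToType
  hx : #x < κ

/-- The order on `𝕋_a`: `(s₂, x₂) ≤ (s₁, x₁)` iff `s₁ ⊆ s₂`, `x₁ ⊆ x₂`, and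
`χ_{a_ξ}(η) ≤ s₂(η)` for all `ξ ∈ x₁` and `η ∈ dom(s₂) \ dom(s₁)`. -/
def TowerLe (κ ε : Cardinal.{u}) (a : ε.ord.ToType → Set κ.ord.ToType)
    (q p : TowerCond κ ε) : Prop :=
  p.dom ≤ q.dom ∧ p.S = q.S ∩ Iio p.dom ∧ p.x ⊆ q.x ∧
  ∀ ξ ∈ p.x, ∀ η, p.dom ≤ η → η < q.dom → η ∈ a ξ → η ∈ q.S

/-- `𝕋_a` is `κ`-closed: every decreasing sequence of conditions of limit length
`γ < κ` has a lower bound. -/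
theorem towerForcing_closed (κ ε : Cardinal.{u}) (hκ : κ.IsRegular) (hκu : ℵ₀ < κ)
    (hε : ε.IsRegular) (hκε : κ < ε)
    (a : ε.ord.ToType → Set κ.ord.ToType)
    (hacard : ∀ ξ, #(a ξ) = κ)
    (hamono : ∀ ξ η, ξ < η → ssubStar κ (a ξ) (a η))
    (γ : Ordinal.{u}) (hγ : γ < κ.ord) (hlim : Order.IsSuccLimit γ)
    (p : γ.ToType → TowerCond κ ε)
    (hdec : ∀ i j, i < j → TowerLe κ ε a (p j) (p i)) :
    ∃ q : TowerCond κ ε, ∀ i, TowerLe κ ε a q (p i) := by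
  classical
  -- Basic facts about γ.ToType
  have hne : Nonempty γ.ToType := Ordinal.nonempty_toType_iff.2 hlim.pos.ne'
  let g := Ordinal.ToType.mk (o := γ)
  -- every element of γ.ToType has a strictly larger one
  have hsucc : ∀ i : γ.ToType, ∃ k, i < k := by
    intro i
    refine ⟨g ⟨(g.symm i).1 + 1, hlim.succ_lt (g.symm i).2⟩, ?_⟩
    have : i = g (g.symm i) := (g.apply_symm_apply i).symm
    rw [this]
    exact g.strictMono (Subtype.mk_lt_mk.2 (by simp only [OrderIso.symm_apply_apply, Ordinal.add_one_eq_succ]; exact Order.lt_succ _))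
  have hsucc2 : ∀ i j : γ.ToType, ∃ k, i < k ∧ j < k := by
    intro i j
    obtain ⟨k, hk⟩ := hsucc (max i j)
    exact ⟨k, (le_max_left i j).trans_lt hk, (le_max_right i j).trans_lt hk⟩
  -- monotonicity of doms and S-compatibility
  have hdommono : ∀ i j : γ.ToType, i ≤ j → (p i).dom ≤ (p j).dom := by
    intro i j hij
    rcases eq_or_lt_of_le hij with rfl | h
    · exact le_rfl
    · exact (hdec i j h).1
  have hScompat : ∀ i j : γ.ToType, (p j).S ∩ Iio (p i).dom ⊆ (p i).S := by
    intro i j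
    rcases lt_trichotomy i j with h | rfl | h
    · rw [(hdec i j h).2.1]
    · exact inter_subset_left
    · intro y hy
      have := (hdec j i h).2.1
      have hyj : y ∈ (p j).S := hy.1
      rw [this] at hyj
      exact hyj.1
  -- the supremum of the domains
  let e := Ordinal.ToType.mk (o := κ.ord)
  let f : γ.ToType → Ordinal := fun i => ((e.symm (p i).dom) : Ordinal)
  have hcardγ : #γ.ToType < κ := by
    rw [Cardinal.mk_toType]
    exact Cardinal.lt_ord.1 hγ
  have hδ : iSup f < κ.ord := by
    apply Ordinal.iSup_lt_ord
    · rwa [hκ.cof_eq]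
    · intro i
      exact (e.symm (p i).dom).2
  set D : κ.ord.ToType := e ⟨iSup f, hδ⟩ with hD
  have hdomle : ∀ i, (p i).dom ≤ D := by
    intro i
    have : (p i).dom = e (e.symm (p i).dom) := (e.apply_symm_apply _).symm
    rw [this, hD]
    exact e.monotone (Subtype.mk_le_mk.2 (Ordinal.le_iSup f i))
  have hltD : ∀ η : κ.ord.ToType, η < D → ∃ i, η < (p i).dom := by
    intro η hη
    have h1 : e.symm η < e.symm D := e.symm.strictMono hη
    rw [hD, e.symm_apply_apply] at h1
    obtain ⟨i, hi⟩ := Ordinal.lt_iSup_iff.1 h1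
    refine ⟨i, ?_⟩
    have : η = e (e.symm η) := (e.apply_symm_apply η).symm
    rw [this]
    have h2 : (p i).dom = e (e.symm (p i).dom) := (e.apply_symm_apply _).symm
    rw [h2]
    exact e.strictMono hi
  -- build the condition q
  have hxcard : #(⋃ i, (p i).x) < κ := by
    refine (Cardinal.mk_iUnion_le_sum_mk).trans_lt ?_
    exact Cardinal.sum_lt_of_isRegular hκ hcardγ (fun i => (p i).hx)
  refine ⟨⟨D, ⋃ i, (p i).S, ?_, ⋃ i, (p i).x, hxcard⟩, ?_⟩
  · intro y hy
    obtain ⟨_, ⟨i, rfl⟩, hyi⟩ := hy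
    exact lt_of_lt_of_le ((p i).hS hyi) (hdomle i)
  · intro i
    refine ⟨hdomle i, ?_, subset_iUnion (fun j => (p j).x) i, ?_⟩
    · apply Subset.antisymm
      · intro y hy
        exact ⟨mem_iUnion.2 ⟨i, hy⟩, (p i).hS hy⟩
      · rintro y ⟨hy1, hy2⟩
        obtain ⟨_, ⟨j, rfl⟩, hyj⟩ := hy1
        exact hScompat i j ⟨hyj, hy2⟩
    · intro ξ hξ η hη1 hη2 hη3
      obtain ⟨j, hj⟩ := hltD η hη2
      obtain ⟨k, hik, hjk⟩ := hsucc2 i j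
      have hηk : η < (p k).dom := hj.trans_le (hdommono j k hjk.le)
      have := (hdec i k hik).2.2.2 ξ hξ η hη1 hηk hη3
      exact mem_iUnion.2 ⟨k, this⟩
end
end

section
/- Assume κ^{<κ} = κ. Then the tower-destroying partial order 𝕋_a has the κ⁺-chain condition: every antichain in 𝕋_a has cardinality at most κ. Indeed, any two conditions (s, x₁) and (s, x₂) with the same first coordinate are compatible. -/
noncomputable section

open Cardinal Set

universe u

/-- Assuming `κ^{<κ} = κ`, `𝕋_a` has the `κ⁺`-chain condition: every antichain has
cardinality at most `κ`; indeed any two conditions with the same first coordinate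
are compatible. -/
theorem towerForcing_cc (κ ε : Cardinal.{u}) (hκ : κ.IsRegular) (hκu : ℵ₀ < κ)
    (hε : ε.IsRegular) (hκε : κ < ε) (hpow : κ ^< κ = κ)
    (a : ε.ord.ToType → Set κ.ord.ToType)
    (hacard : ∀ ξ, #(a ξ) = κ)
    (hamono : ∀ ξ η, ξ < η → ssubStar κ (a ξ) (a η)) :
    (∀ A : Set (TowerCond κ ε),
      (∀ p ∈ A, ∀ q ∈ A, p ≠ q →
        ¬ ∃ r : TowerCond κ ε, TowerLe κ ε a r p ∧ TowerLe κ ε a r q) →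
      #A ≤ κ) ∧
    ∀ p q : TowerCond κ ε, p.dom = q.dom → p.S = q.S →
      ∃ r : TowerCond κ ε, TowerLe κ ε a r p ∧ TowerLe κ ε a r q := by
  -- compatibility of conditions with the same first coordinate
  have compat : ∀ p q : TowerCond κ ε, p.dom = q.dom → p.S = q.S →
      ∃ r : TowerCond κ ε, TowerLe κ ε a r p ∧ TowerLe κ ε a r q := by
    intro p q hdom hS
    have hxcard : #(↥(p.x ∪ q.x)) < κ := by
      refine lt_of_le_of_lt (mk_union_le _ _) ?_
      exact Cardinal.add_lt_of_lt hκ.aleph0_le p.hx q.hx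
    refine ⟨⟨p.dom, p.S, p.hS, p.x ∪ q.x, hxcard⟩, ?_, ?_⟩
    · refine ⟨le_rfl, ?_, subset_union_left, ?_⟩
      · ext η; simp only [mem_inter_iff, mem_Iio]
        exact ⟨fun h => ⟨h, p.hS h⟩, fun h => h.1⟩
      · intro ξ _ η h1 h2 _
        exact absurd (h1.trans_lt h2) (lt_irrefl _)
    · refine ⟨hdom.ge, ?_, subset_union_right, ?_⟩
      · rw [← hS, ← hdom]
        ext η; simp only [mem_inter_iff, mem_Iio]
        exact ⟨fun h => ⟨h, p.hS h⟩, fun h => h.1⟩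
      · intro ξ _ η h1 h2 _
        rw [← hdom] at h1
        exact absurd (h1.trans_lt h2) (lt_irrefl _)
  refine ⟨?_, compat⟩
  intro A hA
  -- inject the antichain into pairs (d, subset of Iio d)
  classical
  have hinj : Function.Injective
      (fun p : A => (⟨p.1.dom, fun η : Iio p.1.dom => (η : κ.ord.ToType) ∈ p.1.S⟩ :
        Σ d : κ.ord.ToType, (Iio d → Prop))) := by
    rintro ⟨⟨pd, pS, phS, px, phx⟩, hp⟩ ⟨⟨qd, qS, qhS, qx, qhx⟩, hq⟩ hpq
    have hdom : pd = qd := congrArg Sigma.fst hpq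
    subst hdom
    have hfun := (Sigma.mk.inj_iff.1 hpq).2
    have hfun' : (fun η : Iio pd => (η : κ.ord.ToType) ∈ pS)
        = fun η : Iio pd => (η : κ.ord.ToType) ∈ qS := eq_of_heq hfun
    have hS : pS = qS := by
      ext η
      constructor
      · intro h
        have := congrFun hfun' ⟨η, phS h⟩
        simpa using this.mp h
      · intro h
        have := congrFun hfun' ⟨η, qhS h⟩
        simpa using this.mpr h
    by_contra hne
    have hne' : (⟨pd, pS, phS, px, phx⟩ : TowerCond κ ε) ≠ ⟨pd, qS, qhS, qx, qhx⟩ :=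
      fun h => hne (Subtype.ext h)
    exact hA _ hp _ hq hne' (compat _ _ rfl hS)
  have hle : #A ≤ #(Σ d : κ.ord.ToType, (Iio d → Prop)) := Cardinal.mk_le_of_injective hinj
  refine hle.trans ?_
  rw [Cardinal.mk_sigma]
  -- each summand is at most κ
  have hbound : ∀ d : κ.ord.ToType, #(Iio d → Prop) ≤ κ := by
    intro d
    have hIio : #(Iio d) < κ := by
      have h1 := Cardinal.card_typein_toType_lt κ d
      haveI hwo : IsWellOrder κ.ord.ToType (· < ·) := isWellOrder_lt
      have h2 := @Ordinal.card_typein _ _ hwo d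
      exact lt_of_eq_of_lt h2 h1
    have h2 : (2 : Cardinal) ≤ κ :=
      le_trans (le_of_lt (by exact_mod_cast Cardinal.nat_lt_aleph0 2)) hκu.le
    calc #(Iio d → Prop) = 2 ^ #(Iio d) := Cardinal.mk_set
      _ ≤ κ ^ #(Iio d) := Cardinal.power_le_power_right h2
      _ ≤ κ ^< κ := Cardinal.le_powerlt κ hIio
      _ = κ := hpow
  calc (Cardinal.sum fun d : κ.ord.ToType => #(Iio d → Prop))
      ≤ Cardinal.sum fun _ : κ.ord.ToType => κ := Cardinal.sum_le_sum _ _ hbound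
    _ = #κ.ord.ToType * κ := by rw [Cardinal.sum_const']
    _ = κ * κ := by rw [Cardinal.mk_ord_toType]
    _ = κ := Cardinal.mul_eq_self hκ.aleph0_le
end
end
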